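/- arXiv:1703.00808 — 2 statements merged into one kernel-verified Lean document; each statement's English description precedes it below -/
import Mathlib

section
/- For the Lie algebra g = g₂.₁ ⊕ 2g₁ spanned by e₁,e₂,e₃,e₄ with only nonzero bracket [e₁,e₂]=e₁, the assignment e₁ ↦ ∂₁, e₂ ↦ x₁∂₁+∂₂, e₃ ↦ ∂₃, e₄ ↦ −e^{x₂}∂₁ − a∂₃ (for a fixed real a) on ℝ³ is a Lie algebra homomorphism into vector fields, and it is injective (faithful). -/
/-- A realization of a real Lie algebra `L` on the manifold `E` (a finite-dimensional
real normed space, serving as the model of the smooth manifold `M`): a linear map into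
vector fields (maps `E → E`) intertwining the Lie brackets, where the bracket of vector
fields is `VectorField.lieBracket`. -/
def IsRealization {L : Type*} [LieRing L] [LieAlgebra ℝ L]
    {E : Type*} [NormedAddCommGroup E] [NormedSpace ℝ E]
    (R : L →ₗ[ℝ] (E → E)) : Prop :=
  ∀ u v : L, R ⁅u, v⁆ = VectorField.lieBracket ℝ (R u) (R v)

/-- The evaluation map `R_p : L → T_pM`, `v ↦ R(v)_p`. -/
def evalAt {L : Type*} [LieRing L] [LieAlgebra ℝ L]
    {E : Type*} [NormedAddCommGroup E] [NormedSpace ℝ E]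
    (R : L →ₗ[ℝ] (E → E)) (p : E) : L →ₗ[ℝ] E :=
  (LinearMap.proj p).comp R


section Aux

variable {L : Type*} [LieRing L] [LieAlgebra ℝ L]

/-- The realization map for statement 14. -/
noncomputable def Rmap14 (b : Module.Basis (Fin 4) ℝ L) (a : ℝ) :
    L →ₗ[ℝ] ((Fin 3 → ℝ) → (Fin 3 → ℝ)) where
  toFun u := fun p =>
    (b.repr u 0 + b.repr u 1 * p 0 - b.repr u 3 * Real.exp (p 1)) • (Pi.single 0 1 : Fin 3 → ℝ)
      + b.repr u 1 • (Pi.single 1 1 : Fin 3 → ℝ)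
      + (b.repr u 2 - a * b.repr u 3) • (Pi.single 2 1 : Fin 3 → ℝ)
  map_add' u v := by
    funext p
    simp only [map_add, Finsupp.add_apply, Pi.add_apply]
    module
  map_smul' r u := by
    funext p
    simp only [map_smul, Finsupp.smul_apply, smul_eq_mul, RingHom.id_apply, Pi.smul_apply]
    module

theorem Rmap14_hasFDerivAt (b : Module.Basis (Fin 4) ℝ L) (a : ℝ) (u : L) (p : Fin 3 → ℝ) :
    HasFDerivAt (Rmap14 b a u)
      (((b.repr u 1) • (ContinuousLinearMap.proj 0 : (Fin 3 → ℝ) →L[ℝ] ℝ)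
        - (b.repr u 3) • (Real.exp (p 1) • (ContinuousLinearMap.proj 1 : (Fin 3 → ℝ) →L[ℝ] ℝ))).smulRight
        (Pi.single 0 1 : Fin 3 → ℝ)) p := by
  have h0 : HasFDerivAt (fun q : Fin 3 → ℝ => q 0)
      (ContinuousLinearMap.proj 0 : (Fin 3 → ℝ) →L[ℝ] ℝ) p :=
    (ContinuousLinearMap.proj (R := ℝ) (φ := fun _ : Fin 3 => ℝ) 0).hasFDerivAt (x := p)
  have h1 : HasFDerivAt (fun q : Fin 3 → ℝ => Real.exp (q 1))
      (Real.exp (p 1) • (ContinuousLinearMap.proj 1 : (Fin 3 → ℝ) →L[ℝ] ℝ)) p :=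
    ((ContinuousLinearMap.proj (R := ℝ) (φ := fun _ : Fin 3 => ℝ) 1).hasFDerivAt (x := p)).exp
  have hf : HasFDerivAt
      (fun q : Fin 3 → ℝ => b.repr u 0 + b.repr u 1 * q 0 - b.repr u 3 * Real.exp (q 1))
      ((b.repr u 1) • (ContinuousLinearMap.proj 0 : (Fin 3 → ℝ) →L[ℝ] ℝ)
        - (b.repr u 3) • (Real.exp (p 1) • (ContinuousLinearMap.proj 1 : (Fin 3 → ℝ) →L[ℝ] ℝ))) p :=
    ((h0.const_mul _).const_add _).sub (h1.const_mul _)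
  exact ((hf.smul_const _).add_const _).add_const _

theorem bracket_eq14 (b : Module.Basis (Fin 4) ℝ L)
    (hbracket : ∀ i j : Fin 4, ⁅b i, b j⁆ =
      if i = 0 ∧ j = 1 then b 0 else if i = 1 ∧ j = 0 then -(b 0) else 0)
    (u v : L) :
    ⁅u, v⁆ = (b.repr u 0 * b.repr v 1 - b.repr u 1 * b.repr v 0) • b 0 := by
  have hu := (b.sum_repr u).symm
  have hv := (b.sum_repr v).symm
  rw [Fin.sum_univ_four] at hu hv
  conv_lhs => rw [hu, hv]
  simp only [add_lie, lie_add, smul_lie, lie_smul, hbracket]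
  simp only [Fin.reduceEq, and_true, and_false, true_and, false_and, and_self, if_true, if_false,
    ite_true, ite_false, smul_zero, zero_add, add_zero, smul_neg]
  module

end Aux

/-- for the Lie algebra `g = g₂.₁ ⊕ 2g₁` with basis `e₁, e₂, e₃, e₄`
and only nonzero bracket `⁅e₁, e₂⁆ = e₁`, the assignment `e₁ ↦ ∂₁`,
`e₂ ↦ x₁∂₁ + ∂₂`, `e₃ ↦ ∂₃`, `e₄ ↦ −e^{x₂}∂₁ − a∂₃` on `ℝ³` is a Lie algebra
homomorphism into vector fields, and it is faithful (injective). -/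
theorem g21_plus_2g1_realization {L : Type*} [LieRing L] [LieAlgebra ℝ L]
    (b : Module.Basis (Fin 4) ℝ L)
    (hbracket : ∀ i j : Fin 4, ⁅b i, b j⁆ =
      if i = 0 ∧ j = 1 then b 0 else if i = 1 ∧ j = 0 then -(b 0) else 0)
    (a : ℝ) :
    ∃ R : L →ₗ[ℝ] ((Fin 3 → ℝ) → (Fin 3 → ℝ)),
      R (b 0) = (fun _ => Pi.single 0 (1 : ℝ)) ∧
      R (b 1) = (fun p => Pi.single 0 (p 0) + Pi.single 1 (1 : ℝ)) ∧
      R (b 2) = (fun _ => Pi.single 2 (1 : ℝ)) ∧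
      R (b 3) = (fun p => Pi.single 0 (-(Real.exp (p 1))) + Pi.single 2 (-a)) ∧
      IsRealization R ∧ Function.Injective R := by
  have hcoord : ∀ i j : Fin 4, b.repr (b i) j = if i = j then 1 else 0 := by
    intro i j
    simp [Module.Basis.repr_self, Finsupp.single_apply]
  refine ⟨Rmap14 b a, ?_, ?_, ?_, ?_, ?_, ?_⟩
  · funext p; ext j
    fin_cases j <;> simp [Rmap14, hcoord] <;> ring
  · funext p; ext j
    fin_cases j <;> simp [Rmap14, hcoord] <;> ring
  · funext p; ext j
    fin_cases j <;> simp [Rmap14, hcoord] <;> ring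
  · funext p; ext j
    fin_cases j <;> simp [Rmap14, hcoord] <;> ring
  · intro u v
    rw [bracket_eq14 b hbracket u v, map_smul]
    funext p
    simp only [VectorField.lieBracket, (Rmap14_hasFDerivAt b a u p).fderiv,
      (Rmap14_hasFDerivAt b a v p).fderiv]
    ext j
    fin_cases j <;>
      simp [Rmap14, ContinuousLinearMap.smulRight_apply, ContinuousLinearMap.proj_apply,
        Pi.single_apply, mul_comm] <;> ring
  · rw [injective_iff_map_eq_zero]
    intro u hu
    have h00 := congrFun (congrFun hu (fun _ => 0)) 0
    have h01 := congrFun (congrFun hu (fun _ => 0)) 1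
    have h02 := congrFun (congrFun hu (fun _ => 0)) 2
    have h10 := congrFun (congrFun hu (fun _ => 1)) 0
    simp [Rmap14, Pi.single_apply] at h00 h01 h02 h10
    have key : b.repr u 3 * (1 - Real.exp 1) = 0 := by
      linear_combination h10 - h00 - h01
    have h3 : b.repr u 3 = 0 := by
      rcases mul_eq_zero.mp key with h | h
      · exact h
      · exfalso
        have : (1 : ℝ) < Real.exp 1 := by
          have := Real.exp_one_gt_d9; nlinarith
        linarith
    have h0 : b.repr u 0 = 0 := by linarith
    have h2 : b.repr u 2 = 0 := by
      have := h02; rw [h3] at this; linarith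
    apply b.ext_elem
    intro i
    fin_cases i <;> simp [h0, h01, h2, h3]
end

section
/- In the Lie algebra g with basis e₁,e₂,e₃,e₄ and only nonzero bracket [e₁,e₂]=e₁, the subalgebra spanned by e₂ + a·e₃ + b·e₄ + c·e₁ contains no nonzero ideal of g, for any reals a, b, c. -/
/-- in the Lie algebra `g` with basis `e₁, e₂, e₃, e₄` and only nonzero
bracket `⁅e₁, e₂⁆ = e₁`, the one-dimensional subalgebra spanned by
`e₂ + a·e₃ + b·e₄ + c·e₁` contains no nonzero ideal of `g`, for any reals `a, b, c`. -/
theorem no_ideal_in_span_h4 {L : Type*} [LieRing L] [LieAlgebra ℝ L]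
    (e : Module.Basis (Fin 4) ℝ L)
    (hbracket : ∀ i j : Fin 4, ⁅e i, e j⁆ =
      if i = 0 ∧ j = 1 then e 0 else if i = 1 ∧ j = 0 then -(e 0) else 0)
    (a b c : ℝ) :
    ∀ I : LieIdeal ℝ L,
      (I : Submodule ℝ L) ≤ Submodule.span ℝ {e 1 + a • e 2 + b • e 3 + c • e 0} →
        I = ⊥ := by
  intro I hI
  rw [LieSubmodule.eq_bot_iff]
  intro x hx
  obtain ⟨t, ht⟩ := Submodule.mem_span_singleton.mp (hI hx)
  have hlie : ⁅e 0, x⁆ ∈ I := I.lie_mem hx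
  obtain ⟨s, hs⟩ := Submodule.mem_span_singleton.mp (hI hlie)
  have hcomp : ⁅e 0, x⁆ = t • e 0 := by
    rw [← ht]
    simp [lie_add, lie_smul, hbracket]
  rw [hcomp] at hs
  have h1 := congrArg (fun z => e.repr z 1) hs
  have h0 := congrArg (fun z => e.repr z 0) hs
  simp [e.repr_self, Finsupp.single_apply] at h1 h0
  subst h1
  simp at h0
  rw [← ht, ← h0, zero_smul]
end
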